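/- Let n ≥ 1 and l ≥ 2 be integers and let B, R ⊆ [1, n] be disjoint subsets. Then the following are equivalent: (1) for every x ∈ B and y ∈ R it is not the case that x ≤ y ≤ x + l − 1; (2) for every x ∈ B and y ∈ R with x < y there exists an integer z with x < z, z + l − 2 < y, and [z, z + l − 2] ∩ (R ∪ B) = ∅. (This is the combinatorial form of the paper's lemma: Hom_Λ(P(B), P(R)) = 0 if and only if condition (2) holds.) -/
import Mathlib


/-- for integers `n ≥ 1`, `l ≥ 2` and disjoint `B, R ⊆ [1, n]`, the
following are equivalent: (1) for every `x ∈ B` and `y ∈ R` it is not the case that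
`x ≤ y ≤ x + l - 1` (i.e. `Hom_Λ(P(B), P(R)) = 0`); (2) for every `x ∈ B` and `y ∈ R`
with `x < y` there is `z` with `x < z`, `z + l - 2 < y` and
`[z, z + l - 2] ∩ (R ∪ B) = ∅`. -/
theorem stmt1 (n l : ℤ) (hn : 1 ≤ n) (hl : 2 ≤ l)
    (B R : Finset ℤ) (hB : B ⊆ Finset.Icc 1 n) (hR : R ⊆ Finset.Icc 1 n)
    (hBR : Disjoint B R) :
    (∀ x ∈ B, ∀ y ∈ R, ¬(x ≤ y ∧ y ≤ x + l - 1)) ↔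
      (∀ x ∈ B, ∀ y ∈ R, x < y →
        ∃ z, x < z ∧ z + l - 2 < y ∧ Finset.Icc z (z + l - 2) ∩ (R ∪ B) = ∅) := by
  constructor
  · intro h1 x hx y hy hxy
    set S := B.filter (· < y) with hS
    have hSne : S.Nonempty := ⟨x, by simp [hS, hx, hxy]⟩
    set m := S.max' hSne with hm
    have hmS : m ∈ S := S.max'_mem hSne
    have hmB : m ∈ B := (Finset.mem_filter.mp hmS).1
    have hmy : m < y := by simpa using (Finset.mem_filter.mp hmS).2
    have hxm : x ≤ m := S.le_max' x (by simp [hS, hx, hxy])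
    have hmly : m + l ≤ y := by
      have := h1 m hmB y hy
      push_neg at this
      have := this hmy.le
      omega
    refine ⟨m + 1, by omega, by omega, ?_⟩
    ext a
    simp only [Finset.mem_inter, Finset.mem_union, Finset.mem_Icc,
      Finset.notMem_empty, iff_false]
    rintro ⟨⟨ha1, ha2⟩, haRB⟩
    rcases haRB with haR | haB
    · exact h1 m hmB a haR ⟨by omega, by omega⟩
    · have : a ∈ S := Finset.mem_filter.mpr ⟨haB, by show a < y; omega⟩
      have := S.le_max' a this
      omega
  · intro h2 x hx y hy ⟨hxy, hyxl⟩
    have hne : x ≠ y := fun h => (Finset.disjoint_left.mp hBR hx) (h ▸ hy)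
    have hlt : x < y := lt_of_le_of_ne hxy hne
    obtain ⟨z, hz1, hz2, _⟩ := h2 x hx y hy hlt
    omega
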